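/- For every complex number ν, the function ψ(x) = ∫₀^∞ cosh(νt)·e^{−2πe^{x}·cosh t} dt is twice differentiable on ℝ and satisfies ψ''(x) = (4π²e^{2x} + ν²)·ψ(x) for all real x; that is, ψ solves the Schrödinger equation −ψ'' + 4π²e^{2x}ψ = Eψ with E = −ν². -/

import Mathlib

open MeasureTheory Real Set Filter

noncomputable section
namespace BesselAux

lemma norm_exp_le (w : ℂ) : ‖Complex.exp w‖ ≤ Real.exp ‖w‖ := by
  rw [Complex.norm_exp]
  exact Real.exp_le_exp.2 ((le_abs_self _).trans (Complex.abs_re_le_norm w))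

lemma norm_cosh_le (w : ℂ) : ‖Complex.cosh w‖ ≤ Real.exp ‖w‖ := by
  have h1 := norm_exp_le w
  have h2 := norm_exp_le (-w)
  rw [norm_neg] at h2
  calc ‖Complex.cosh w‖ = ‖(Complex.exp w + Complex.exp (-w)) / 2‖ := rfl
    _ ≤ (‖Complex.exp w‖ + ‖Complex.exp (-w)‖) / 2 := by
        rw [norm_div]; gcongr; · exact norm_add_le _ _
        · simp
    _ ≤ Real.exp ‖w‖ := by
        rw [div_le_iff₀ (by norm_num : (0:ℝ) < 2)]; push_cast; linarith

lemma norm_sinh_le (w : ℂ) : ‖Complex.sinh w‖ ≤ Real.exp ‖w‖ := by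
  have h1 := norm_exp_le w
  have h2 := norm_exp_le (-w)
  rw [norm_neg] at h2
  calc ‖Complex.sinh w‖ = ‖(Complex.exp w - Complex.exp (-w)) / 2‖ := rfl
    _ ≤ (‖Complex.exp w‖ + ‖Complex.exp (-w)‖) / 2 := by
        rw [norm_div]; gcongr; · exact norm_sub_le _ _
        · simp
    _ ≤ Real.exp ‖w‖ := by
        rw [div_le_iff₀ (by norm_num : (0:ℝ) < 2)]; push_cast; linarith

lemma cexp_eq (c t : ℝ) :
    Complex.exp (-(c:ℂ) * Complex.cosh (t:ℂ)) = ((Real.exp (-(c * Real.cosh t)) : ℝ) : ℂ) := by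
  have h : (-(c:ℂ)) * Complex.cosh (t:ℂ) = ((-(c * Real.cosh t) : ℝ) : ℂ) := by
    push_cast; ring
  rw [h, Complex.ofReal_exp]

lemma norm_cexp (c t : ℝ) :
    ‖Complex.exp (-(c:ℂ) * Complex.cosh (t:ℂ))‖ = Real.exp (-(c * Real.cosh t)) := by
  rw [cexp_eq, Complex.norm_real, Real.norm_eq_abs, abs_of_pos (Real.exp_pos _)]

lemma half_exp_le_cosh (t : ℝ) : Real.exp t / 2 ≤ Real.cosh t := by
  rw [Real.cosh_eq]; linarith [Real.exp_pos (-t)]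

lemma integrableOn_exp_bound (a b : ℝ) (hb : 0 < b) :
    IntegrableOn (fun t => Real.exp (a * t - b * Real.exp t)) (Ioi (0:ℝ)) := by
  have key : ∀ t ∈ Ioi (0:ℝ), ‖Real.exp (a * t - b * Real.exp t)‖ ≤
      Real.exp ((|a|+1)^2 / b) * Real.exp (-1 * t) := by
    intro t ht
    rw [Real.norm_eq_abs, abs_of_pos (Real.exp_pos _), ← Real.exp_add]
    apply Real.exp_le_exp.2
    have ht0 : (0:ℝ) ≤ t := le_of_lt ht
    have h1 : 1 + t + t^2/2 ≤ Real.exp t := Real.quadratic_le_exp_of_nonneg ht0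
    have hb' : (|a|+1)^2 / b * b = (|a|+1)^2 := div_mul_cancel₀ _ hb.ne'
    nlinarith [sq_nonneg (b*t - (|a|+1)), le_abs_self a, abs_nonneg a,
      mul_le_mul_of_nonneg_left h1 hb.le, mul_pos hb ht, sq_nonneg t]
  have hint : IntegrableOn (fun t => Real.exp ((|a|+1)^2 / b) * Real.exp (-1 * t)) (Ioi (0:ℝ)) :=
    (exp_neg_integrableOn_Ioi 0 one_pos).const_mul _
  exact hint.mono' (Continuous.aestronglyMeasurable (by fun_prop))
    ((ae_restrict_iff' measurableSet_Ioi).2 (ae_of_all _ key))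

lemma integrableOn_of_bound {f : ℝ → ℂ} (hf : Continuous f) (A a b : ℝ) (hb : 0 < b)
    (h : ∀ t ∈ Ioi (0:ℝ), ‖f t‖ ≤ A * Real.exp (a * t - b * Real.exp t)) :
    IntegrableOn f (Ioi (0:ℝ)) :=
  ((integrableOn_exp_bound a b hb).const_mul A).mono' hf.aestronglyMeasurable
    ((ae_restrict_iff' measurableSet_Ioi).2 (ae_of_all _ h))

lemma tendsto_exp_bound (a b : ℝ) (hb : 0 < b) :
    Tendsto (fun t => Real.exp (a * t - b * Real.exp t)) atTop (nhds 0) := by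
  apply Real.tendsto_exp_atBot.comp
  have h1 : Tendsto (fun t : ℝ => t * ((b/2) * t - a)) atTop atTop := by
    apply Tendsto.atTop_mul_atTop₀ tendsto_id
    apply tendsto_atTop_add_const_right
    exact Tendsto.const_mul_atTop (by positivity) tendsto_id
  have h2 : Tendsto (fun t : ℝ => -(t * ((b/2) * t - a))) atTop atBot :=
    tendsto_neg_atTop_atBot.comp h1
  apply tendsto_atBot_mono' atTop _ h2
  filter_upwards [eventually_ge_atTop (0:ℝ)] with t ht
  have h1 : 1 + t + t^2/2 ≤ Real.exp t := Real.quadratic_le_exp_of_nonneg ht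
  nlinarith [mul_le_mul_of_nonneg_left h1 hb.le]

end BesselAux

namespace BesselAux

def f0 (ν : ℂ) (x t : ℝ) : ℂ :=
  Complex.cosh (ν * t) * Complex.exp (-(2 * Real.pi * Real.exp x : ℝ) * Complex.cosh t)

def f1 (ν : ℂ) (x t : ℝ) : ℂ :=
  -((2 * Real.pi * Real.exp x : ℝ) : ℂ) * Complex.cosh t * f0 ν x t

def f2 (ν : ℂ) (x t : ℝ) : ℂ :=
  (-((2 * Real.pi * Real.exp x : ℝ) : ℂ) * Complex.cosh t
    + ((2 * Real.pi * Real.exp x : ℝ) : ℂ)^2 * Complex.cosh t ^ 2) * f0 ν x t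

lemma cont_f0 (ν : ℂ) (x : ℝ) : Continuous (f0 ν x) := by unfold f0; fun_prop
lemma cont_f1 (ν : ℂ) (x : ℝ) : Continuous (f1 ν x) := by
  unfold f1; exact ((continuous_const.mul (by fun_prop)).mul (cont_f0 ν x))
lemma cont_f2 (ν : ℂ) (x : ℝ) : Continuous (f2 ν x) := by
  unfold f2
  exact (((continuous_const.mul (by fun_prop)).add
    (continuous_const.mul (by fun_prop))).mul (cont_f0 ν x))

lemma hasDerivAt_coeff (x : ℝ) (w : ℂ) :
    HasDerivAt (fun x : ℝ => -((2 * Real.pi * Real.exp x : ℝ) : ℂ) * w)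
      (-((2 * Real.pi * Real.exp x : ℝ) : ℂ) * w) x := by
  have hc : HasDerivAt (fun x : ℝ => 2 * Real.pi * Real.exp x) (2 * Real.pi * Real.exp x) x := by
    simpa using (Real.hasDerivAt_exp x).const_mul (2 * Real.pi)
  exact ((hc.ofReal_comp).neg).mul_const w

lemma hasDerivAt_f0 (ν : ℂ) (x t : ℝ) : HasDerivAt (fun x => f0 ν x t) (f1 ν x t) x := by
  have h := ((hasDerivAt_coeff x (Complex.cosh t)).cexp).const_mul (Complex.cosh (ν * t))
  refine h.congr_deriv ?_
  unfold f1 f0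
  ring

lemma hasDerivAt_f1 (ν : ℂ) (x t : ℝ) : HasDerivAt (fun x => f1 ν x t) (f2 ν x t) x := by
  have h := (hasDerivAt_coeff x (Complex.cosh t)).mul (hasDerivAt_f0 ν x t)
  refine h.congr_deriv ?_
  unfold f2 f1 f0
  ring

lemma norm_f0_le (ν : ℂ) (x t : ℝ) (ht : 0 ≤ t) :
    ‖f0 ν x t‖ ≤ Real.exp (‖ν‖ * t - Real.pi * Real.exp x * Real.exp t) := by
  have hν : ‖Complex.cosh (ν * (t:ℂ))‖ ≤ Real.exp (‖ν‖ * t) := by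
    have h := norm_cosh_le (ν * (t:ℂ))
    rwa [norm_mul, Complex.norm_real, Real.norm_eq_abs, abs_of_nonneg ht] at h
  have hcosh : Real.pi * Real.exp x * Real.exp t ≤ 2 * Real.pi * Real.exp x * Real.cosh t := by
    have h := mul_le_mul_of_nonneg_left (half_exp_le_cosh t)
      (by positivity : (0:ℝ) ≤ 2 * Real.pi * Real.exp x)
    nlinarith []
  calc ‖f0 ν x t‖
      = ‖Complex.cosh (ν * (t:ℂ))‖ * Real.exp (-(2 * Real.pi * Real.exp x * Real.cosh t)) := by
        rw [f0, norm_mul, norm_cexp]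
    _ ≤ Real.exp (‖ν‖ * t) * Real.exp (-(Real.pi * Real.exp x * Real.exp t)) := by
        apply mul_le_mul hν (Real.exp_le_exp.2 (by linarith)) (Real.exp_pos _).le
          (Real.exp_pos _).le
    _ = _ := by rw [← Real.exp_add]; ring_nf

lemma norm_cosh_real_le (t : ℝ) (ht : 0 ≤ t) : ‖Complex.cosh (t:ℂ)‖ ≤ Real.exp t := by
  have h := norm_cosh_le (t:ℂ)
  rwa [Complex.norm_real, Real.norm_eq_abs, abs_of_nonneg ht] at h

lemma norm_f1_le (ν : ℂ) (x t : ℝ) (ht : 0 ≤ t) :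
    ‖f1 ν x t‖ ≤ (2 * Real.pi * Real.exp x) *
      Real.exp ((1 + ‖ν‖) * t - Real.pi * Real.exp x * Real.exp t) := by
  have hc : (0:ℝ) < 2 * Real.pi * Real.exp x := by positivity
  calc ‖f1 ν x t‖
      = (2 * Real.pi * Real.exp x) * ‖Complex.cosh (t:ℂ)‖ * ‖f0 ν x t‖ := by
        rw [f1, norm_mul, norm_mul, norm_neg, Complex.norm_real, Real.norm_eq_abs,
          abs_of_pos hc]
    _ ≤ (2 * Real.pi * Real.exp x) * Real.exp t *
          Real.exp (‖ν‖ * t - Real.pi * Real.exp x * Real.exp t) := by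
        apply mul_le_mul (mul_le_mul_of_nonneg_left (norm_cosh_real_le t ht) hc.le)
          (norm_f0_le ν x t ht) (norm_nonneg _) (by positivity)
    _ = _ := by rw [mul_assoc, ← Real.exp_add]; ring_nf

lemma norm_f2_le (ν : ℂ) (x t : ℝ) (ht : 0 ≤ t) :
    ‖f2 ν x t‖ ≤ (2 * Real.pi * Real.exp x + (2 * Real.pi * Real.exp x)^2) *
      Real.exp ((2 + ‖ν‖) * t - Real.pi * Real.exp x * Real.exp t) := by
  have hc : (0:ℝ) < 2 * Real.pi * Real.exp x := by positivity
  have hch := norm_cosh_real_le t ht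
  have h1 : ‖-((2 * Real.pi * Real.exp x : ℝ) : ℂ) * Complex.cosh t
      + ((2 * Real.pi * Real.exp x : ℝ) : ℂ)^2 * Complex.cosh t ^ 2‖ ≤
      (2 * Real.pi * Real.exp x + (2 * Real.pi * Real.exp x)^2) * Real.exp (2*t) := by
    have e1 : ‖-((2 * Real.pi * Real.exp x : ℝ) : ℂ) * Complex.cosh t‖ ≤
        (2 * Real.pi * Real.exp x) * Real.exp t := by
      rw [norm_mul, norm_neg, Complex.norm_real, Real.norm_eq_abs, abs_of_pos hc]
      exact mul_le_mul_of_nonneg_left hch hc.le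
    have e2 : ‖((2 * Real.pi * Real.exp x : ℝ) : ℂ)^2 * Complex.cosh t ^ 2‖ ≤
        (2 * Real.pi * Real.exp x)^2 * (Real.exp t)^2 := by
      rw [norm_mul, norm_pow, norm_pow, Complex.norm_real, Real.norm_eq_abs, abs_of_pos hc]
      exact mul_le_mul_of_nonneg_left (pow_le_pow_left₀ (norm_nonneg _) hch 2) (by positivity)
    calc ‖_ + _‖ ≤ _ := norm_add_le _ _
      _ ≤ (2 * Real.pi * Real.exp x) * Real.exp t
            + (2 * Real.pi * Real.exp x)^2 * (Real.exp t)^2 := add_le_add e1 e2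
      _ ≤ (2 * Real.pi * Real.exp x + (2 * Real.pi * Real.exp x)^2) * Real.exp (2*t) := by
          have het : Real.exp t ≤ Real.exp (2*t) := Real.exp_le_exp.2 (by linarith)
          have het2 : (Real.exp t)^2 = Real.exp (2*t) := by
            rw [sq, ← Real.exp_add]; ring_nf
          nlinarith [Real.exp_pos t, Real.exp_pos (2*t), sq_nonneg (Real.exp t), hc]
  calc ‖f2 ν x t‖ ≤ ((2 * Real.pi * Real.exp x + (2 * Real.pi * Real.exp x)^2) * Real.exp (2*t))
        * Real.exp (‖ν‖ * t - Real.pi * Real.exp x * Real.exp t) := by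
        rw [f2, norm_mul]
        exact mul_le_mul h1 (norm_f0_le ν x t ht) (norm_nonneg _) (by positivity)
    _ = _ := by rw [mul_assoc, ← Real.exp_add]; ring_nf

lemma int_f0 (ν : ℂ) (x : ℝ) : IntegrableOn (f0 ν x) (Ioi (0:ℝ)) := by
  apply integrableOn_of_bound (cont_f0 ν x) 1 ‖ν‖ (Real.pi * Real.exp x) (by positivity)
  intro t ht
  simpa using norm_f0_le ν x t (le_of_lt ht)

lemma deriv_step1 (ν : ℂ) (x₀ : ℝ) :
    HasDerivAt (fun x => ∫ t in Ioi (0:ℝ), f0 ν x t) (∫ t in Ioi (0:ℝ), f1 ν x₀ t) x₀ ∧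
    IntegrableOn (f1 ν x₀) (Ioi (0:ℝ)) := by
  have h := hasDerivAt_integral_of_dominated_loc_of_deriv_le (μ := volume.restrict (Ioi (0:ℝ)))
    (F := fun x t => f0 ν x t) (F' := fun x t => f1 ν x t) (x₀ := x₀)
    (bound := fun t => (2 * Real.pi * Real.exp (x₀+1)) *
      Real.exp ((1 + ‖ν‖) * t - (Real.pi * Real.exp (x₀-1)) * Real.exp t))
    (Metric.ball_mem_nhds x₀ one_pos)
    (Filter.Eventually.of_forall fun x => (cont_f0 ν x).aestronglyMeasurable)
    (int_f0 ν x₀)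
    ((cont_f1 ν x₀).aestronglyMeasurable)
    ?_ ?_ ?_
  · exact ⟨h.2, h.1⟩
  · rw [ae_restrict_iff' measurableSet_Ioi]
    apply ae_of_all
    intro t ht x hx
    have ht0 : (0:ℝ) ≤ t := le_of_lt ht
    have hx' : |x - x₀| < 1 := by rwa [Metric.mem_ball, Real.dist_eq] at hx
    obtain ⟨hd1, hd2⟩ := abs_lt.1 hx'
    have hxa : x ≤ x₀ + 1 := by linarith
    have hxb : x₀ - 1 ≤ x := by linarith
    calc ‖f1 ν x t‖ ≤ (2 * Real.pi * Real.exp x) *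
          Real.exp ((1 + ‖ν‖) * t - Real.pi * Real.exp x * Real.exp t) := norm_f1_le ν x t ht0
      _ ≤ _ := by
          have hex : Real.exp x ≤ Real.exp (x₀+1) := Real.exp_le_exp.2 hxa
          have hex2 : Real.exp (x₀-1) ≤ Real.exp x := Real.exp_le_exp.2 hxb
          have harg := mul_le_mul_of_nonneg_right
            (mul_le_mul_of_nonneg_left hex2 Real.pi_pos.le) (Real.exp_pos t).le
          apply mul_le_mul ?_ (Real.exp_le_exp.2 (by nlinarith [])) (Real.exp_pos _).le
            (by positivity)
          nlinarith [Real.pi_pos]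
  · exact ((integrableOn_exp_bound _ _ (by positivity)).const_mul _)
  · exact ae_of_all _ fun t x _ => hasDerivAt_f0 ν x t

lemma deriv_step2 (ν : ℂ) (x₀ : ℝ) :
    HasDerivAt (fun x => ∫ t in Ioi (0:ℝ), f1 ν x t) (∫ t in Ioi (0:ℝ), f2 ν x₀ t) x₀ ∧
    IntegrableOn (f2 ν x₀) (Ioi (0:ℝ)) := by
  have h := hasDerivAt_integral_of_dominated_loc_of_deriv_le (μ := volume.restrict (Ioi (0:ℝ)))
    (F := fun x t => f1 ν x t) (F' := fun x t => f2 ν x t) (x₀ := x₀)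
    (bound := fun t => (2 * Real.pi * Real.exp (x₀+1) + (2 * Real.pi * Real.exp (x₀+1))^2) *
      Real.exp ((2 + ‖ν‖) * t - (Real.pi * Real.exp (x₀-1)) * Real.exp t))
    (Metric.ball_mem_nhds x₀ one_pos)
    (Filter.Eventually.of_forall fun x => (cont_f1 ν x).aestronglyMeasurable)
    (deriv_step1 ν x₀).2
    ((cont_f2 ν x₀).aestronglyMeasurable)
    ?_ ?_ ?_
  · exact ⟨h.2, h.1⟩
  · rw [ae_restrict_iff' measurableSet_Ioi]
    apply ae_of_all
    intro t ht x hx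
    have ht0 : (0:ℝ) ≤ t := le_of_lt ht
    have hx' : |x - x₀| < 1 := by rwa [Metric.mem_ball, Real.dist_eq] at hx
    obtain ⟨hd1, hd2⟩ := abs_lt.1 hx'
    have hxa : x ≤ x₀ + 1 := by linarith
    have hxb : x₀ - 1 ≤ x := by linarith
    calc ‖f2 ν x t‖ ≤ (2 * Real.pi * Real.exp x + (2 * Real.pi * Real.exp x)^2) *
          Real.exp ((2 + ‖ν‖) * t - Real.pi * Real.exp x * Real.exp t) := norm_f2_le ν x t ht0
      _ ≤ _ := by
          have hex : Real.exp x ≤ Real.exp (x₀+1) := Real.exp_le_exp.2 hxa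
          have hex2 : Real.exp (x₀-1) ≤ Real.exp x := Real.exp_le_exp.2 hxb
          have harg := mul_le_mul_of_nonneg_right
            (mul_le_mul_of_nonneg_left hex2 Real.pi_pos.le) (Real.exp_pos t).le
          apply mul_le_mul ?_ (Real.exp_le_exp.2 (by nlinarith [])) (Real.exp_pos _).le
            (by positivity)
          have h2 : 2*Real.pi*Real.exp x ≤ 2*Real.pi*Real.exp (x₀+1) := by
            nlinarith [Real.pi_pos]
          have h3 := pow_le_pow_left₀ (by positivity : (0:ℝ) ≤ 2*Real.pi*Real.exp x) h2 2
          linarith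
  · exact ((integrableOn_exp_bound _ _ (by positivity)).const_mul _)
  · exact ae_of_all _ fun t x _ => hasDerivAt_f1 ν x t

end BesselAux

namespace BesselAux

lemma integral_g_eq_zero (ν : ℂ) (c : ℝ) (hc : 0 < c) :
    ∫ t in Ioi (0:ℝ),
      ((c:ℂ)^2 * Complex.sinh t ^ 2 - (c:ℂ) * Complex.cosh t - ν^2) * Complex.cosh (ν * t)
        * Complex.exp (-(c:ℂ) * Complex.cosh t) = 0 := by
  set G : ℝ → ℂ := fun t => -(Complex.exp (-(c:ℂ) * Complex.cosh t) *
    ((c:ℂ) * Complex.sinh t * Complex.cosh (ν * t) + ν * Complex.sinh (ν * t))) with hGdef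
  set g : ℝ → ℂ := fun t =>
    ((c:ℂ)^2 * Complex.sinh t ^ 2 - (c:ℂ) * Complex.cosh t - ν^2) * Complex.cosh (ν * t)
      * Complex.exp (-(c:ℂ) * Complex.cosh t) with hgdef
  have hderiv : ∀ t : ℝ, HasDerivAt G (g t) t := by
    intro t
    have hcosh : HasDerivAt (fun t : ℝ => Complex.cosh (t:ℂ)) (Complex.sinh t) t :=
      (Complex.hasDerivAt_cosh (t:ℂ)).comp_ofReal
    have hsinh : HasDerivAt (fun t : ℝ => Complex.sinh (t:ℂ)) (Complex.cosh t) t :=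
      (Complex.hasDerivAt_sinh (t:ℂ)).comp_ofReal
    have hνc : HasDerivAt (fun t : ℝ => Complex.cosh (ν * (t:ℂ))) (ν * Complex.sinh (ν * t)) t := by
      have h : HasDerivAt (fun w : ℂ => Complex.cosh (ν * w)) (ν * Complex.sinh (ν * (t:ℂ)))
          (t:ℂ) := by
        exact ((Complex.hasDerivAt_cosh (ν * (t:ℂ))).comp (t:ℂ)
          ((hasDerivAt_id (t:ℂ)).const_mul ν)).congr_deriv (by ring)
      exact h.comp_ofReal
    have hνs : HasDerivAt (fun t : ℝ => Complex.sinh (ν * (t:ℂ))) (ν * Complex.cosh (ν * t)) t := by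
      have h : HasDerivAt (fun w : ℂ => Complex.sinh (ν * w)) (ν * Complex.cosh (ν * (t:ℂ)))
          (t:ℂ) := by
        exact ((Complex.hasDerivAt_sinh (ν * (t:ℂ))).comp (t:ℂ)
          ((hasDerivAt_id (t:ℂ)).const_mul ν)).congr_deriv (by ring)
      exact h.comp_ofReal
    have hE : HasDerivAt (fun t : ℝ => Complex.exp (-(c:ℂ) * Complex.cosh t))
        (Complex.exp (-(c:ℂ) * Complex.cosh t) * (-(c:ℂ) * Complex.sinh t)) t :=
      (hcosh.const_mul (-(c:ℂ))).cexp
    have hS := ((hsinh.const_mul (c:ℂ)).mul hνc).add (hνs.const_mul ν)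
    have htotal := (hE.mul hS).neg
    refine htotal.congr_deriv ?_
    simp only [hgdef, Pi.add_apply, Pi.mul_apply]
    ring
  have hcont : ContinuousWithinAt G (Ici (0:ℝ)) 0 := (hderiv 0).continuousAt.continuousWithinAt
  have hint : IntegrableOn g (Ioi (0:ℝ)) := by
    apply integrableOn_of_bound (by rw [hgdef]; fun_prop) (c^2 + c + ‖ν‖^2) (2 + ‖ν‖) (c/2)
      (by positivity)
    intro t ht
    have ht0 : (0:ℝ) ≤ t := le_of_lt ht
    have hs := norm_sinh_le (t:ℂ)
    rw [Complex.norm_real, Real.norm_eq_abs, abs_of_nonneg ht0] at hs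
    have hc2 := norm_cosh_real_le t ht0
    have hνn : ‖Complex.cosh (ν * (t:ℂ))‖ ≤ Real.exp (‖ν‖ * t) := by
      have h := norm_cosh_le (ν * (t:ℂ))
      rwa [norm_mul, Complex.norm_real, Real.norm_eq_abs, abs_of_nonneg ht0] at h
    have het : Real.exp t ≤ Real.exp (2*t) := Real.exp_le_exp.2 (by linarith)
    have het1 : (1:ℝ) ≤ Real.exp (2*t) := Real.one_le_exp (by linarith)
    have h1 : ‖(c:ℂ)^2 * Complex.sinh (t:ℂ) ^ 2 - (c:ℂ) * Complex.cosh (t:ℂ) - ν^2‖ ≤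
        (c^2 + c + ‖ν‖^2) * Real.exp (2*t) := by
      have e1 : ‖(c:ℂ)^2 * Complex.sinh (t:ℂ) ^ 2‖ ≤ c^2 * Real.exp (2*t) := by
        rw [norm_mul, norm_pow, norm_pow, Complex.norm_real, Real.norm_eq_abs, abs_of_pos hc]
        have : ‖Complex.sinh (t:ℂ)‖^2 ≤ (Real.exp t)^2 :=
          pow_le_pow_left₀ (norm_nonneg _) hs 2
        have he2 : (Real.exp t)^2 = Real.exp (2*t) := by rw [sq, ← Real.exp_add]; ring_nf
        nlinarith [sq_nonneg c]
      have e2 : ‖(c:ℂ) * Complex.cosh (t:ℂ)‖ ≤ c * Real.exp (2*t) := by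
        rw [norm_mul, Complex.norm_real, Real.norm_eq_abs, abs_of_pos hc]
        nlinarith
      have e3 : ‖ν^2‖ ≤ ‖ν‖^2 * Real.exp (2*t) := by
        rw [norm_pow]
        nlinarith [sq_nonneg ‖ν‖]
      calc ‖(c:ℂ)^2 * Complex.sinh (t:ℂ) ^ 2 - (c:ℂ) * Complex.cosh (t:ℂ) - ν^2‖
          ≤ ‖(c:ℂ)^2 * Complex.sinh (t:ℂ) ^ 2 - (c:ℂ) * Complex.cosh (t:ℂ)‖ + ‖ν^2‖ :=
            norm_sub_le _ _
        _ ≤ ‖(c:ℂ)^2 * Complex.sinh (t:ℂ) ^ 2‖ + ‖(c:ℂ) * Complex.cosh (t:ℂ)‖ + ‖ν^2‖ := by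
            linarith [norm_sub_le ((c:ℂ)^2 * Complex.sinh (t:ℂ) ^ 2) ((c:ℂ) * Complex.cosh (t:ℂ))]
        _ ≤ _ := by linarith
    have hexp : Real.exp (-(c * Real.cosh t)) ≤ Real.exp (-(c/2 * Real.exp t)) := by
      apply Real.exp_le_exp.2
      have h := mul_le_mul_of_nonneg_left (half_exp_le_cosh t) hc.le
      nlinarith
    calc ‖g t‖ = ‖(c:ℂ)^2 * Complex.sinh (t:ℂ) ^ 2 - (c:ℂ) * Complex.cosh (t:ℂ) - ν^2‖ *
          ‖Complex.cosh (ν * (t:ℂ))‖ * Real.exp (-(c * Real.cosh t)) := by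
          rw [hgdef]; rw [norm_mul, norm_mul, norm_cexp]
      _ ≤ ((c^2 + c + ‖ν‖^2) * Real.exp (2*t)) * Real.exp (‖ν‖ * t) *
            Real.exp (-(c/2 * Real.exp t)) := by
          apply mul_le_mul (mul_le_mul h1 hνn (norm_nonneg _) (by positivity)) hexp
            (Real.exp_pos _).le (by positivity)
      _ = _ := by rw [mul_assoc, mul_assoc, ← Real.exp_add, ← Real.exp_add]; ring_nf
  have htend : Tendsto G atTop (nhds 0) := by
    apply squeeze_zero_norm'
      (a := fun t => (c + ‖ν‖) * Real.exp ((1 + ‖ν‖) * t - (c/2) * Real.exp t))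
    · filter_upwards [eventually_ge_atTop (0:ℝ)] with t ht0
      have hs := norm_sinh_le (t:ℂ)
      rw [Complex.norm_real, Real.norm_eq_abs, abs_of_nonneg ht0] at hs
      have hνn : ‖Complex.cosh (ν * (t:ℂ))‖ ≤ Real.exp (‖ν‖ * t) := by
        have h := norm_cosh_le (ν * (t:ℂ))
        rwa [norm_mul, Complex.norm_real, Real.norm_eq_abs, abs_of_nonneg ht0] at h
      have hνs : ‖Complex.sinh (ν * (t:ℂ))‖ ≤ Real.exp (‖ν‖ * t) := by
        have h := norm_sinh_le (ν * (t:ℂ))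
        rwa [norm_mul, Complex.norm_real, Real.norm_eq_abs, abs_of_nonneg ht0] at h
      have hSn : ‖(c:ℂ) * Complex.sinh (t:ℂ) * Complex.cosh (ν * (t:ℂ))
          + ν * Complex.sinh (ν * (t:ℂ))‖ ≤ (c + ‖ν‖) * Real.exp ((1 + ‖ν‖) * t) := by
        have e1 : ‖(c:ℂ) * Complex.sinh (t:ℂ) * Complex.cosh (ν * (t:ℂ))‖ ≤
            c * (Real.exp t * Real.exp (‖ν‖ * t)) := by
          rw [norm_mul, norm_mul, Complex.norm_real, Real.norm_eq_abs, abs_of_pos hc, mul_assoc]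
          apply mul_le_mul_of_nonneg_left _ hc.le
          exact mul_le_mul hs hνn (norm_nonneg _) (Real.exp_pos _).le
        have e2 : ‖ν * Complex.sinh (ν * (t:ℂ))‖ ≤ ‖ν‖ * Real.exp (‖ν‖ * t) := by
          rw [norm_mul]
          exact mul_le_mul_of_nonneg_left hνs (norm_nonneg _)
        have he : Real.exp t * Real.exp (‖ν‖ * t) = Real.exp ((1 + ‖ν‖) * t) := by
          rw [← Real.exp_add]; ring_nf
        have he2 : Real.exp (‖ν‖ * t) ≤ Real.exp ((1 + ‖ν‖) * t) :=
          Real.exp_le_exp.2 (by nlinarith)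
        have e1' : ‖(c:ℂ) * Complex.sinh (t:ℂ) * Complex.cosh (ν * (t:ℂ))‖ ≤
            c * Real.exp ((1 + ‖ν‖) * t) := he ▸ e1
        have e2' : ‖ν * Complex.sinh (ν * (t:ℂ))‖ ≤ ‖ν‖ * Real.exp ((1 + ‖ν‖) * t) :=
          le_trans e2 (mul_le_mul_of_nonneg_left he2 (norm_nonneg _))
        calc ‖(c:ℂ) * Complex.sinh (t:ℂ) * Complex.cosh (ν * (t:ℂ))
              + ν * Complex.sinh (ν * (t:ℂ))‖
            ≤ ‖(c:ℂ) * Complex.sinh (t:ℂ) * Complex.cosh (ν * (t:ℂ))‖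
              + ‖ν * Complex.sinh (ν * (t:ℂ))‖ := norm_add_le _ _
          _ ≤ (c + ‖ν‖) * Real.exp ((1 + ‖ν‖) * t) := by nlinarith [e1', e2']
      have hexp : Real.exp (-(c * Real.cosh t)) ≤ Real.exp (-(c/2 * Real.exp t)) := by
        apply Real.exp_le_exp.2
        have h := mul_le_mul_of_nonneg_left (half_exp_le_cosh t) hc.le
        nlinarith
      calc ‖G t‖ = Real.exp (-(c * Real.cosh t)) * ‖(c:ℂ) * Complex.sinh (t:ℂ) *
            Complex.cosh (ν * (t:ℂ)) + ν * Complex.sinh (ν * (t:ℂ))‖ := by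
            rw [hGdef]; rw [norm_neg, norm_mul, norm_cexp]
        _ ≤ Real.exp (-(c/2 * Real.exp t)) * ((c + ‖ν‖) * Real.exp ((1 + ‖ν‖) * t)) :=
            mul_le_mul hexp hSn (norm_nonneg _) (Real.exp_pos _).le
        _ = (c + ‖ν‖) * Real.exp ((1 + ‖ν‖) * t - (c/2) * Real.exp t) := by
            rw [Real.exp_sub, Real.exp_neg]
            field_simp
    · have h := (tendsto_exp_bound (1 + ‖ν‖) (c/2) (by positivity)).const_mul (c + ‖ν‖)
      simpa using h
  have hG0 : G 0 = 0 := by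
    simp [hGdef]
  have key := integral_Ioi_of_hasDerivAt_of_tendsto hcont (fun t _ => hderiv t) hint htend
  rw [key, hG0, sub_zero]

end BesselAux

open BesselAux in
/-- `ψ(x) = K_ν(2πeˣ) = ∫₀^∞ cosh(νt) e^{−2πeˣ cosh t} dt` solves
`−ψ'' + 4π²e^{2x} ψ = −ν² ψ`, i.e. `ψ'' = (4π²e^{2x} + ν²) ψ`. -/
theorem bessel_solves_schroedinger (ν : ℂ) :
    ∃ ψ' ψ'' : ℝ → ℂ,
      (∀ x : ℝ, HasDerivAt
        (fun x : ℝ => ∫ t in Set.Ioi (0:ℝ),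
          Complex.cosh (ν * t) * Complex.exp (-(2 * Real.pi * Real.exp x : ℝ) * Complex.cosh t))
        (ψ' x) x) ∧
      (∀ x : ℝ, HasDerivAt ψ' (ψ'' x) x) ∧
      (∀ x : ℝ, ψ'' x = (4 * Real.pi ^ 2 * Real.exp (2 * x) + ν ^ 2) *
        ∫ t in Set.Ioi (0:ℝ),
          Complex.cosh (ν * t) * Complex.exp (-(2 * Real.pi * Real.exp x : ℝ) * Complex.cosh t)) := by
  refine ⟨fun x => ∫ t in Ioi (0:ℝ), f1 ν x t,
          fun x => ∫ t in Ioi (0:ℝ), f2 ν x t,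
          fun x => (deriv_step1 ν x).1, fun x => (deriv_step2 ν x).1, fun x => ?_⟩
  show (∫ t in Ioi (0:ℝ), f2 ν x t) = _
  have h0 := int_f0 ν x
  have h2 := (deriv_step2 ν x).2
  set c : ℝ := 2 * Real.pi * Real.exp x with hcdef
  have hc : (0:ℝ) < c := by rw [hcdef]; positivity
  have hid : ∀ t : ℝ, f2 ν x t = ((c:ℂ)^2 + ν^2) * f0 ν x t +
      ((c:ℂ)^2 * Complex.sinh t ^ 2 - (c:ℂ) * Complex.cosh t - ν^2) * Complex.cosh (ν * t)
        * Complex.exp (-(c:ℂ) * Complex.cosh t) := by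
    intro t
    have hpyth := Complex.cosh_sq_sub_sinh_sq (t:ℂ)
    simp only [f2, f0, hcdef]
    linear_combination (Complex.cosh (ν * (t:ℂ)) *
      Complex.exp (-((2 * Real.pi * Real.exp x : ℝ):ℂ) * Complex.cosh (t:ℂ)) *
      ((2 * Real.pi * Real.exp x : ℝ):ℂ)^2) * hpyth
  have hgint : IntegrableOn (fun t : ℝ =>
      ((c:ℂ)^2 * Complex.sinh t ^ 2 - (c:ℂ) * Complex.cosh t - ν^2) * Complex.cosh (ν * t)
        * Complex.exp (-(c:ℂ) * Complex.cosh t)) (Ioi (0:ℝ)) := by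
    have hsub := h2.sub (h0.const_mul ((c:ℂ)^2 + ν^2))
    apply hsub.congr (Filter.Eventually.of_forall fun t => ?_)
    simp only [Pi.sub_apply]
    rw [hid t]
    ring
  have key : (∫ t in Ioi (0:ℝ), f2 ν x t) =
      ((c:ℂ)^2 + ν^2) * ∫ t in Ioi (0:ℝ), f0 ν x t := by
    have hfe : (fun t : ℝ => f2 ν x t) = (fun t : ℝ => ((c:ℂ)^2 + ν^2) * f0 ν x t +
        ((c:ℂ)^2 * Complex.sinh t ^ 2 - (c:ℂ) * Complex.cosh t - ν^2) * Complex.cosh (ν * t)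
          * Complex.exp (-(c:ℂ) * Complex.cosh t)) := funext hid
    rw [hfe, integral_add (h0.const_mul _) hgint, integral_g_eq_zero ν c hc, add_zero,
      integral_const_mul]
  rw [key]
  congr 1
  have he : Real.exp (2 * x) = Real.exp x * Real.exp x := by rw [two_mul, Real.exp_add]
  rw [hcdef]
  push_cast [he]
  ring
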